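/- Let F(x,t) = Σ_{n≥0} Σ_{μ ∈ M_n} t^{plt_k(μ)} x^n be the generating function for Motzkin paths by length and number of k-plateaus, for a fixed k ≥ 0. Then F satisfies x²·F(x,t)² − (1 − x − x^{k+2}(t−1))·F(x,t) + 1 = 0. -/

import Mathlib

inductive Step : Type
  | U | F | D
  deriving DecidableEq

instance : Fintype Step :=
  ⟨{Step.U, Step.F, Step.D}, by intro x; cases x <;> simp⟩

def stepVal : Step → ℤ
  | .U => 1
  | .F => 0
  | .D => -1

/-- Height of the path after the first `i` steps. -/
def ht (p : List Step) (i : ℕ) : ℤ := ((p.take i).map stepVal).sum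

/-- A Motzkin path: starts and ends at height 0 and stays nonnegative. -/
def IsMotzkin (p : List Step) : Prop :=
  ht p p.length = 0 ∧ ∀ i ≤ p.length, 0 ≤ ht p i

instance : DecidablePred IsMotzkin := fun p => by
  unfold IsMotzkin; infer_instance

/-- Number of ascents: maximal runs of up steps (counted at their last up step). -/
def asc (p : List Step) : ℕ :=
  ((List.range p.length).filter
    (fun i => p[i]? == some Step.U && p[i+1]? != some Step.U)).length

/-- Number of occurrences of `w` as a consecutive subword of `p`. -/
def countSubword (w p : List Step) : ℕ :=
  ((List.range p.length).filter (fun i => w.isPrefixOf (p.drop i))).length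

/-- Number of plateaus: occurrences of a subword U F^k D for some k ≥ 0. -/
def plt (p : List Step) : ℕ :=
  ((List.range p.length).filter (fun i =>
    (List.range p.length).any (fun k =>
      (Step.U :: (List.replicate k Step.F ++ [Step.D])).isPrefixOf (p.drop i)))).length
open PowerSeries Polynomial

/-- A k-plateau is an occurrence of the consecutive subword U F^k D. -/
def pltk (k : ℕ) (p : List Step) : ℕ :=
  countSubword (Step.U :: (List.replicate k Step.F ++ [Step.D])) p

/-- The generating function for Motzkin paths by length and number of k-plateaus. -/
noncomputable def Fpltk (k : ℕ) : PowerSeries (Polynomial ℚ) :=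
  PowerSeries.mk fun n =>
    ∑ f : Fin n → Step,
      if IsMotzkin (List.ofFn f) then (Polynomial.X : Polynomial ℚ) ^ pltk k (List.ofFn f) else 0


-- basic ht lemmas
lemma ht_zero (p : List Step) : ht p 0 = 0 := rfl

lemma ht_cons (s : Step) (p : List Step) (i : ℕ) :
    ht (s :: p) (i + 1) = stepVal s + ht p i := by
  simp [ht, List.take_succ_cons]

lemma ht_length (p : List Step) : ht p p.length = (p.map stepVal).sum := by
  simp [ht]

lemma ht_add (p : List Step) (a b : ℕ) :
    ht p (a + b) = ht p a + ht (p.drop a) b := by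
  simp [ht, List.take_add]

lemma ht_take (p : List Step) (j s : ℕ) (h : s ≤ j) :
    ht (p.take j) s = ht p s := by
  simp [ht, List.take_take, Nat.min_eq_left h]

lemma ht_append_left (a b : List Step) (i : ℕ) (h : i ≤ a.length) :
    ht (a ++ b) i = ht a i := by
  simp [ht, List.take_append_of_le_length h]

lemma sum_drop (p : List Step) (i : ℕ) (hi : i ≤ p.length) :
    ((p.drop i).map stepVal).sum = ht p p.length - ht p i := by
  have := ht_add p i (p.length - i)
  rw [Nat.add_sub_cancel' hi] at this
  have hl : (p.drop i).length = p.length - i := by simp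
  rw [← hl] at this
  rw [this, ht_length]
  ring

-- recursive count
def csw (w : List Step) : List Step → ℕ
  | [] => 0
  | s :: p => (if w.isPrefixOf (s :: p) then 1 else 0) + csw w p

lemma countSubword_eq_csw (w p : List Step) : countSubword w p = csw w p := by
  induction p with
  | nil => rfl
  | cons s p ih =>
    unfold countSubword at *
    rw [csw, ← ih]
    rw [List.length_cons, List.range_succ_eq_map, List.filter_cons,
      List.filter_map]
    have hc : ((fun i => w.isPrefixOf (List.drop i (s :: p))) ∘ Nat.succ)
        = fun i => w.isPrefixOf (List.drop i p) := by
      funext i; simp [Function.comp]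
    by_cases h : w.isPrefixOf (s :: p) <;>
      simp [h, hc, Nat.add_comm]
section Part2
open List

abbrev wpat (k : ℕ) : List Step := Step.U :: (List.replicate k Step.F ++ [Step.D])

lemma wpat_length (k : ℕ) : (wpat k).length = k + 2 := by simp [wpat]

-- no Motzkin path has a suffix U F^k
lemma no_UF_suffix {μ : List Step} (hμ : IsMotzkin μ) (i : ℕ) (hi : i ≤ μ.length) (k : ℕ) :
    μ.drop i ≠ Step.U :: List.replicate k Step.F := by
  intro h
  have h1 : ((μ.drop i).map stepVal).sum = ht μ μ.length - ht μ i := sum_drop μ i hi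
  have h2 : ((Step.U :: List.replicate k Step.F).map stepVal).sum = 1 := by
    simp [stepVal, List.map_replicate]
  rw [h, h2, hμ.1] at h1
  have := hμ.2 i hi
  omega

-- straddling occurrences at the μ/D boundary are impossible
lemma prefix_drop_iff {μ : List Step} (hμ : IsMotzkin μ) (i : ℕ) (hi : i < μ.length)
    (k : ℕ) (ν : List Step) :
    wpat k <+: (μ.drop i ++ Step.D :: ν) ↔ wpat k <+: μ.drop i := by
  set a := μ.drop i with ha
  have hm : a.length = μ.length - i := by simp [ha]
  have hm1 : 1 ≤ a.length := by omega
  constructor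
  · intro h
    have heq : wpat k = (a ++ Step.D :: ν).take (k + 2) := by
      have := List.prefix_iff_eq_take.mp h
      rwa [wpat_length] at this
    by_cases hle : k + 2 ≤ a.length
    · rw [List.take_append_of_le_length hle] at heq
      exact heq ▸ List.take_prefix _ _
    · exfalso
      set m := a.length with hmdef
      have htake : (a ++ Step.D :: ν).take (m + 1) = a ++ [Step.D] := by
        have : (a ++ Step.D :: ν).take (a.length + 1) = a ++ (Step.D :: ν).take 1 :=
          List.take_length_add_append 1
        simpa using this
      have hkey : a ++ [Step.D] = (wpat k).take (m + 1) := by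
        rw [heq, List.take_take, Nat.min_eq_left (by omega)]
        exact htake.symm
      by_cases hmk : m = k + 1
      · have : a ++ [Step.D] = (Step.U :: List.replicate k Step.F) ++ [Step.D] := by
          rw [hkey, hmk]
          have : (wpat k).take (k + 2) = wpat k := by
            rw [← wpat_length k]; exact List.take_length ..
          rw [this]; rfl
        have ha2 : a = Step.U :: List.replicate k Step.F :=
          List.append_inj_left' this (by rfl)
        exact no_UF_suffix hμ i (le_of_lt hi) k ha2
      · have hmk' : m ≤ k := by omega
        have : a ++ [Step.D] = Step.U :: List.replicate m Step.F := by
          rw [hkey, wpat, List.take_succ_cons, List.take_append_of_le_length (by simp; omega),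
            List.take_replicate, Nat.min_eq_left hmk']
        obtain ⟨m', hm'⟩ : ∃ m', m = m' + 1 := ⟨m - 1, by omega⟩
        rw [hm', List.replicate_succ' (n := m') (a := Step.F)] at this
        have : a ++ [Step.D] = (Step.U :: List.replicate m' Step.F) ++ [Step.F] := by
          rw [this]; rfl
        have : ([Step.D] : List Step) = [Step.F] :=
          List.append_inj_right this (by simp; omega)
        simp at this
  · intro h
    exact h.trans (List.prefix_append a _)

-- prefix at the initial U
lemma prefix_U_aux (k : ℕ) : ∀ (μ ν : List Step), (∀ i ≤ μ.length, 0 ≤ ht μ i) →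
    ((List.replicate k Step.F ++ [Step.D]) <+: (μ ++ Step.D :: ν) ↔ μ = List.replicate k Step.F) := by
  induction k with
  | zero =>
    rintro (_ | ⟨s, μ⟩) ν hμ
    · simp
    · simp only [List.replicate_zero, List.nil_append, List.cons_append, List.cons_prefix_cons]
      constructor
      · rintro ⟨rfl, -⟩
        have := hμ 1 (by simp)
        rw [ht_cons, ht_zero] at this
        simp [stepVal] at this
      · intro h; exact absurd h (by simp)
  | succ k ih =>
    rintro (_ | ⟨s, μ⟩) ν hμ
    · constructor
      · intro h
        rw [List.replicate_succ, List.cons_append, List.nil_append, List.cons_prefix_cons] at h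
        exact absurd h.1 (by simp)
      · intro h; exact absurd h (by simp)
    · rw [List.replicate_succ, List.cons_append, List.cons_append, List.cons_prefix_cons]
      by_cases hs : s = Step.F
      · subst hs
        have hμ' : ∀ i ≤ μ.length, 0 ≤ ht μ i := by
          intro i hi
          have := hμ (i+1) (by simp; omega)
          rw [ht_cons] at this
          simpa [stepVal] using this
        rw [ih μ ν hμ']
        simp
      · constructor
        · rintro ⟨rfl, -⟩; exact absurd rfl hs
        · intro h
          rw [List.cons_eq_cons] at h
          exact absurd h.1 hs

lemma prefix_U_iff {μ : List Step} (hμ : IsMotzkin μ) (k : ℕ) (ν : List Step) :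
    wpat k <+: (Step.U :: (μ ++ Step.D :: ν)) ↔ μ = List.replicate k Step.F := by
  rw [show (Step.U :: (μ ++ Step.D :: ν) : List Step)
      = Step.U :: (μ ++ Step.D :: ν) from rfl]
  rw [wpat, List.cons_prefix_cons]
  simpa using prefix_U_aux k μ ν hμ.2

end Part2
section Part3
open List

def pltk' (k : ℕ) (p : List Step) : ℕ := countSubword (wpat k) p

lemma csw_cons_ne_U (k : ℕ) (s : Step) (hs : s ≠ Step.U) (p : List Step) :
    csw (wpat k) (s :: p) = csw (wpat k) p := by
  rw [csw]
  have : ¬ (wpat k).isPrefixOf (s :: p) := by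
    simp only [List.isPrefixOf_iff_prefix, wpat, List.cons_prefix_cons]
    rintro ⟨rfl, -⟩; exact hs rfl
  simp [this]

lemma csw_append {w : List Step} {μ : List Step} (b : List Step)
    (h : ∀ i < μ.length, (w <+: (μ.drop i ++ b) ↔ w <+: μ.drop i)) :
    csw w (μ ++ b) = csw w μ + csw w b := by
  induction μ with
  | nil => simp [csw]
  | cons s μ ih =>
    rw [List.cons_append, csw, csw]
    have h0 := h 0 (by simp)
    simp only [List.drop_zero] at h0
    rw [ih (fun i hi => by simpa using h (i+1) (by simpa using hi))]
    have hcond : ((w.isPrefixOf (s :: (μ ++ b))) = true) ↔ ((w.isPrefixOf (s :: μ)) = true) := by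
      simpa [List.isPrefixOf_iff_prefix] using h0
    by_cases hp : w.isPrefixOf (s :: μ)
    · simp only [hp, hcond.mpr hp, if_pos]; omega
    · have hnp : ¬ w.isPrefixOf (s :: (μ ++ b)) := fun hh => hp (hcond.mp hh)
      simp only [hp, hnp, if_neg, Bool.false_eq_true, not_false_eq_true]; omega

lemma pltk'_cons_F (k : ℕ) (p : List Step) : pltk' k (Step.F :: p) = pltk' k p := by
  rw [pltk', pltk', countSubword_eq_csw, countSubword_eq_csw]
  exact csw_cons_ne_U k Step.F (by simp) p

lemma pltk'_replicate (k j : ℕ) : pltk' k (List.replicate j Step.F) = 0 := by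
  induction j with
  | zero => rfl
  | succ j ih =>
    rw [List.replicate_succ, ← ih, pltk'_cons_F]

lemma pltk'_nil (k : ℕ) : pltk' k [] = 0 := rfl

lemma pltk'_decomp {μ : List Step} (hμ : IsMotzkin μ) (k : ℕ) (ν : List Step) :
    pltk' k (Step.U :: (μ ++ Step.D :: ν))
      = pltk' k μ + pltk' k ν + (if μ = List.replicate k Step.F then 1 else 0) := by
  simp only [pltk', countSubword_eq_csw]
  rw [csw]
  have h1 : csw (wpat k) (μ ++ Step.D :: ν) = csw (wpat k) μ + csw (wpat k) (Step.D :: ν) :=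
    csw_append (Step.D :: ν) (fun i hi => prefix_drop_iff hμ i hi k ν)
  rw [h1, csw_cons_ne_U k Step.D (by simp) ν]
  have h2 : ((wpat k).isPrefixOf (Step.U :: (μ ++ Step.D :: ν)) = true)
      ↔ μ = List.replicate k Step.F := by
    rw [List.isPrefixOf_iff_prefix]
    exact prefix_U_iff hμ k ν
  by_cases hc : μ = List.replicate k Step.F
  · simp [h2.mpr hc, hc]; omega
  · have : ¬ (wpat k).isPrefixOf (Step.U :: (μ ++ Step.D :: ν)) := fun hh => hc (h2.mp hh)
    simp [this, hc]

-- Motzkin structural lemmas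
lemma motzkin_cons_F {p : List Step} : IsMotzkin (Step.F :: p) ↔ IsMotzkin p := by
  constructor
  · rintro ⟨h1, h2⟩
    refine ⟨?_, ?_⟩
    · have := h1
      rw [List.length_cons, ht_cons] at this
      simpa [stepVal] using this
    · intro i hi
      have := h2 (i+1) (by simpa using Nat.succ_le_succ hi)
      rw [ht_cons] at this
      simpa [stepVal] using this
  · rintro ⟨h1, h2⟩
    refine ⟨?_, ?_⟩
    · rw [List.length_cons, ht_cons, h1]; simp [stepVal]
    · intro i hi
      match i with
      | 0 => simp [ht_zero]
      | Nat.succ j =>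
        rw [ht_cons]
        have := h2 j (by simpa using hi)
        simp [stepVal]; omega

lemma ht_mid (μ ν : List Step) (t : ℕ) :
    (t ≤ μ.length → ht (μ ++ Step.D :: ν) t = ht μ t) ∧
    (∀ s, ht (μ ++ Step.D :: ν) (μ.length + 1 + s) = ht μ μ.length - 1 + ht ν s) := by
  constructor
  · intro h; exact ht_append_left μ _ t h
  · intro s
    have h1 : μ.length + 1 + s = μ.length + (1 + s) := by omega
    rw [h1, ht_add]
    have h2 : (μ ++ Step.D :: ν).drop μ.length = Step.D :: ν := List.drop_left
    rw [h2]
    have h3 : ht (Step.D :: ν) (1 + s) = stepVal Step.D + ht ν s := by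
      rw [show 1 + s = s + 1 by omega, ht_cons]
    rw [h3, ht_append_left μ _ μ.length le_rfl]
    simp [stepVal]; ring

lemma motzkin_compose {μ ν : List Step} (hμ : IsMotzkin μ) (hν : IsMotzkin ν) :
    IsMotzkin (Step.U :: (μ ++ Step.D :: ν)) := by
  have hlen : (Step.U :: (μ ++ Step.D :: ν)).length = μ.length + ν.length + 2 := by
    simp; omega
  have key : ∀ t ≤ μ.length + ν.length + 1,
      ht (Step.U :: (μ ++ Step.D :: ν)) (t + 1) = 1 + ht (μ ++ Step.D :: ν) t := by
    intro t _; rw [ht_cons]; simp [stepVal]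
  constructor
  · rw [hlen, show μ.length + ν.length + 2 = (μ.length + ν.length + 1) + 1 by omega,
      key _ le_rfl, show μ.length + ν.length + 1 = μ.length + 1 + ν.length by omega,
      (ht_mid μ ν 0).2 ν.length, hμ.1]
    have : ht ν ν.length = 0 := hν.1
    rw [this]; ring
  · intro i hi
    match i with
    | 0 => simp [ht_zero]
    | Nat.succ t =>
      rw [hlen] at hi
      have ht' : t ≤ μ.length + ν.length + 1 := by omega
      rw [key t ht']
      by_cases hc : t ≤ μ.length
      · rw [(ht_mid μ ν t).1 hc]
        have := hμ.2 t hc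
        omega
      · obtain ⟨s, rfl⟩ : ∃ s, t = μ.length + 1 + s := ⟨t - μ.length - 1, by omega⟩
        rw [(ht_mid μ ν 0).2 s, hμ.1]
        have := hν.2 s (by omega)
        omega

end Part3
section Part4
open List

lemma stepVal_ge (s : Step) : -1 ≤ stepVal s := by cases s <;> simp [stepVal]

lemma stepVal_eq_neg_one {s : Step} (h : stepVal s = -1) : s = Step.D := by
  cases s <;> simp_all [stepVal]

lemma motzkin_decomp {p : List Step} (hp : IsMotzkin p) (hh : p.head? = some Step.U) :
    ∃ μ ν, IsMotzkin μ ∧ IsMotzkin ν ∧ p = Step.U :: (μ ++ Step.D :: ν) := by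
  obtain ⟨q, rfl⟩ := List.head?_eq_some_iff.mp hh
  set p := Step.U :: q with hpdef
  have hq : ∀ t, ht p (t + 1) = 1 + ht q t := by
    intro t; rw [hpdef, ht_cons]; simp [stepVal]
  have hplen : p.length = q.length + 1 := by simp [hpdef]
  have hex : ∃ t, ht p t = 0 ∧ 1 ≤ t := ⟨p.length, hp.1, by simp [hplen]⟩
  classical
  obtain ⟨i, ⟨hi0, hi1⟩, hmin⟩ :
      ∃ i, (ht p i = 0 ∧ 1 ≤ i) ∧ ∀ t < i, ¬(ht p t = 0 ∧ 1 ≤ t) :=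
    ⟨Nat.find hex, Nat.find_spec hex, fun t htl => Nat.find_min hex htl⟩
  have hone : ∀ (s : Step) (l : List Step), ht (s :: l) 1 = stepVal s := by
    intro s l
    have := ht_cons s l 0
    rw [ht_zero] at this
    simpa using this
  have hile : i ≤ p.length := by
    by_contra h
    exact hmin p.length (by omega) ⟨hp.1, by omega⟩
  have hi2 : 2 ≤ i := by
    by_contra h
    have hieq : i = 1 := by omega
    subst hieq
    have h1 := hq 0
    rw [ht_zero] at h1
    rw [show (1:ℕ) = 0 + 1 from rfl] at hi0
    omega
  set j := i - 2 with hjdef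
  have hij : i = j + 2 := by omega
  have hjq : j + 1 ≤ q.length := by omega
  -- height facts about q
  have hq_j1 : ht q (j + 1) = -1 := by
    have h1 := hq (j + 1)
    rw [show j + 1 + 1 = i by omega] at h1
    omega
  have hq_nonneg : ∀ s, s ≤ j → 0 ≤ ht q s := by
    intro s hs
    have h1 := hq s
    have h2 : ht p (s+1) ≠ 0 := fun hc => hmin (s+1) (by omega) ⟨hc, by omega⟩
    have h3 : 0 ≤ ht p (s+1) := hp.2 (s+1) (by omega)
    omega
  have hstep2 : ht q (j + 1) = ht q j + stepVal (q[j]'(by omega)) := by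
    rw [ht_add q j 1, List.drop_eq_getElem_cons (by omega : j < q.length), hone]
  have hq_j : ht q j = 0 := by
    have h1 := hq_nonneg j le_rfl
    have h3 := stepVal_ge (q[j]'(by omega))
    omega
  have hstep : stepVal (q[j]'(by omega)) = -1 := by omega
  have hD : q[j]'(by omega) = Step.D := stepVal_eq_neg_one hstep
  refine ⟨q.take j, q.drop (j+1), ?_, ?_, ?_⟩
  · constructor
    · have hlen : (q.take j).length = j := by simp; omega
      rw [hlen, ht_take q j j le_rfl, hq_j]
    · intro s hs
      have hlen : (q.take j).length = j := by simp; omega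
      rw [hlen] at hs
      rw [ht_take q j s hs]
      exact hq_nonneg s hs
  · have hν : ∀ s, ht (q.drop (j+1)) s = ht q (j+1+s) + 1 := by
      intro s
      have := ht_add q (j+1) s
      omega
    constructor
    · have hlen : (q.drop (j+1)).length = q.length - (j+1) := by simp
      rw [hlen, hν, show j + 1 + (q.length - (j+1)) = q.length by omega]
      have : ht p (q.length + 1) = 0 := by rw [← hplen]; exact hp.1
      have := hq q.length
      omega
    · intro s hs
      have hlen : (q.drop (j+1)).length = q.length - (j+1) := by simp
      rw [hν]
      have h1 : 0 ≤ ht p (j+1+s+1) := hp.2 _ (by omega)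
      have := hq (j+1+s)
      omega
  · rw [hpdef]
    congr 1
    conv_lhs => rw [← List.take_append_drop j q]
    rw [List.drop_eq_getElem_cons (by omega : j < q.length), hD]

lemma motzkin_unique_len {μ ν μ' ν' : List Step} (hμ : IsMotzkin μ) (hμ' : IsMotzkin μ')
    (heq : μ ++ Step.D :: ν = μ' ++ Step.D :: ν') : ¬ μ.length < μ'.length := by
  intro hlt
  have htake : (μ ++ Step.D :: ν).take (μ.length + 1) = μ ++ [Step.D] := by
    have : (μ ++ Step.D :: ν).take (μ.length + 1) = μ ++ (Step.D :: ν).take 1 :=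
      List.take_length_add_append 1
    simpa using this
  have htake' : (μ' ++ Step.D :: ν').take (μ.length + 1) = μ'.take (μ.length + 1) :=
    List.take_append_of_le_length (by omega)
  have hkey : μ'.take (μ.length + 1) = μ ++ [Step.D] := by
    rw [← htake', ← heq, htake]
  have hht : ht μ' (μ.length + 1) = -1 := by
    rw [show ht μ' (μ.length + 1) = ((μ'.take (μ.length+1)).map stepVal).sum from rfl, hkey]
    simp [stepVal]
    have : (μ.map stepVal).sum = ht μ μ.length := (ht_length μ).symm
    rw [this, hμ.1]
  have := hμ'.2 (μ.length + 1) (by omega)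
  omega

lemma motzkin_unique {μ ν μ' ν' : List Step} (hμ : IsMotzkin μ) (hμ' : IsMotzkin μ')
    (heq : μ ++ Step.D :: ν = μ' ++ Step.D :: ν') : μ = μ' ∧ ν = ν' := by
  have h1 := motzkin_unique_len hμ hμ' heq
  have h2 := motzkin_unique_len hμ' hμ heq.symm
  have hlen : μ.length = μ'.length := by omega
  have := List.append_inj heq hlen
  refine ⟨this.1, ?_⟩
  have := this.2
  simpa using this

end Part4

section Part5
open Finset

lemma pltk_eq (k : ℕ) (p : List Step) : pltk k p = pltk' k p := rfl

def Mset (n : ℕ) : Finset (List Step) :=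
  ((Finset.univ : Finset (Fin n → Step)).image List.ofFn).filter IsMotzkin

lemma mem_Mset {n : ℕ} {l : List Step} : l ∈ Mset n ↔ l.length = n ∧ IsMotzkin l := by
  rw [Mset, Finset.mem_filter, Finset.mem_image]
  constructor
  · rintro ⟨⟨f, -, rfl⟩, h2⟩
    exact ⟨by simp, h2⟩
  · rintro ⟨h1, h2⟩
    subst h1
    exact ⟨⟨l.get, Finset.mem_univ _, List.ofFn_get l⟩, h2⟩

noncomputable def AA (k n : ℕ) : Polynomial ℚ :=
  ∑ l ∈ Mset n, (Polynomial.X : Polynomial ℚ) ^ pltk k l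

lemma coeff_Fpltk (k n : ℕ) : PowerSeries.coeff n (Fpltk k) = AA k n := by
  rw [Fpltk, PowerSeries.coeff_mk, AA, Mset, Finset.sum_filter,
    Finset.sum_image (fun f _ g _ h => List.ofFn_injective h)]

lemma Mset_zero : Mset 0 = {([] : List Step)} := by
  ext l
  rw [mem_Mset, Finset.mem_singleton]
  constructor
  · rintro ⟨h1, -⟩; exact List.length_eq_zero_iff.mp h1
  · rintro rfl; exact ⟨rfl, by decide⟩

lemma Mset_one : Mset 1 = {([Step.F] : List Step)} := by
  ext l
  rw [mem_Mset, Finset.mem_singleton]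
  constructor
  · rintro ⟨h1, h2⟩
    obtain ⟨a, rfl⟩ := List.length_eq_one_iff.mp h1
    cases a
    · exact absurd h2 (by decide)
    · rfl
    · exact absurd h2 (by decide)
  · rintro rfl; exact ⟨rfl, by decide⟩

lemma AA_zero (k : ℕ) : AA k 0 = 1 := by
  rw [AA, Mset_zero, Finset.sum_singleton, pltk_eq, pltk'_nil, pow_zero]

lemma AA_one (k : ℕ) : AA k 1 = 1 := by
  rw [AA, Mset_one, Finset.sum_singleton]
  have : pltk k [Step.F] = 0 := by
    rw [pltk_eq, show ([Step.F] : List Step) = Step.F :: [] from rfl, pltk'_cons_F, pltk'_nil]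
  rw [this, pow_zero]

lemma motzkin_replicate (j : ℕ) : IsMotzkin (List.replicate j Step.F) := by
  have hht : ∀ i, ht (List.replicate j Step.F) i = 0 := by
    intro i
    simp [ht, List.take_replicate, List.map_replicate, stepVal]
  exact ⟨hht _, fun i _ => le_of_eq (hht i).symm⟩

lemma head_ne_D {l : List Step} (hl : IsMotzkin l) (t : List Step) : l ≠ Step.D :: t := by
  rintro rfl
  have h1 := hl.2 1 (by simp)
  have h2 := ht_cons Step.D t 0
  rw [ht_zero] at h2
  simp only [show (0:ℕ)+1 = 1 from rfl] at h2
  rw [h2] at h1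
  simp [stepVal] at h1

lemma sumB (k i : ℕ) :
    ∑ μ ∈ Mset i, (Polynomial.X : Polynomial ℚ)
        ^ (pltk k μ + (if μ = List.replicate k Step.F then 1 else 0))
      = AA k i + (if i = k then ((Polynomial.X : Polynomial ℚ) - 1) else 0) := by
  classical
  have step : ∀ μ ∈ Mset i,
      (Polynomial.X : Polynomial ℚ) ^ (pltk k μ + (if μ = List.replicate k Step.F then 1 else 0))
        = (Polynomial.X : Polynomial ℚ) ^ pltk k μ
          + (if μ = List.replicate k Step.F then ((Polynomial.X : Polynomial ℚ) - 1) else 0) := by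
    intro μ _
    by_cases hc : μ = List.replicate k Step.F
    · subst hc
      rw [if_pos rfl, if_pos rfl, pltk_eq, pltk'_replicate]
      ring
    · rw [if_neg hc, if_neg hc]
      ring
  rw [Finset.sum_congr rfl step, Finset.sum_add_distrib]
  congr 1
  rw [Finset.sum_ite_eq' (Mset i) (List.replicate k Step.F)
    (fun _ => (Polynomial.X : Polynomial ℚ) - 1)]
  have hmem : List.replicate k Step.F ∈ Mset i ↔ i = k := by
    rw [mem_Mset]
    simp [motzkin_replicate, eq_comm]
  by_cases hik : i = k
  · rw [if_pos (hmem.mpr hik), if_pos hik]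
  · rw [if_neg (fun h => hik (hmem.mp h)), if_neg hik]

lemma AA_rec (k m : ℕ) :
    AA k (m + 2) = AA k (m + 1)
      + ∑ ij ∈ Finset.HasAntidiagonal.antidiagonal m,
          (AA k ij.1 + (if ij.1 = k then ((Polynomial.X : Polynomial ℚ) - 1) else 0))
            * AA k ij.2 := by
  classical
  rw [show AA k (m+2) = ∑ l ∈ Mset (m+2), (Polynomial.X : Polynomial ℚ) ^ pltk k l from rfl]
  rw [← Finset.sum_filter_add_sum_filter_not (Mset (m+2))
      (fun l => l.head? = some Step.F)]
  congr 1
  · -- F part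
    refine Finset.sum_bij (fun l _ => l.tail) ?_ ?_ ?_ ?_
    · rintro l hl
      rw [Finset.mem_filter, mem_Mset] at hl
      obtain ⟨⟨hlen, hM⟩, hhd⟩ := hl
      obtain ⟨t, rfl⟩ := List.head?_eq_some_iff.mp hhd
      rw [mem_Mset]
      exact ⟨by simpa using hlen, motzkin_cons_F.mp hM⟩
    · rintro l₁ hl₁ l₂ hl₂ he
      rw [Finset.mem_filter] at hl₁ hl₂
      obtain ⟨t₁, h₁⟩ := List.head?_eq_some_iff.mp hl₁.2
      obtain ⟨t₂, h₂⟩ := List.head?_eq_some_iff.mp hl₂.2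
      subst h₁; subst h₂
      simp only [List.tail_cons] at he
      rw [he]
    · rintro q hq
      rw [mem_Mset] at hq
      refine ⟨Step.F :: q, ?_, by simp⟩
      rw [Finset.mem_filter, mem_Mset]
      exact ⟨⟨by simp [hq.1], motzkin_cons_F.mpr hq.2⟩, by simp⟩
    · rintro l hl
      rw [Finset.mem_filter] at hl
      obtain ⟨t, rfl⟩ := List.head?_eq_some_iff.mp hl.2
      simp only [List.tail_cons]
      rw [pltk_eq, pltk_eq, pltk'_cons_F]
  · -- U part
    have hU : Finset.filter (fun l => ¬ l.head? = some Step.F) (Mset (m+2))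
        = Finset.filter (fun l => l.head? = some Step.U) (Mset (m+2)) := by
      apply Finset.filter_congr
      intro l hl
      rw [mem_Mset] at hl
      obtain ⟨hlen, hM⟩ := hl
      match l, hlen with
      | s :: t, _ =>
        cases s
        · simp
        · simp
        · exact absurd rfl (head_ne_D hM t)
    rw [hU]
    -- RHS rewrite into triple sum
    have hrhs : ∑ ij ∈ Finset.HasAntidiagonal.antidiagonal m,
          (AA k ij.1 + (if ij.1 = k then ((Polynomial.X : Polynomial ℚ) - 1) else 0))
            * AA k ij.2
        = ∑ x ∈ (Finset.HasAntidiagonal.antidiagonal m).sigma (fun ij => Mset ij.1 ×ˢ Mset ij.2),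
            (Polynomial.X : Polynomial ℚ)
              ^ (pltk k x.2.1 + pltk k x.2.2
                  + (if x.2.1 = List.replicate k Step.F then 1 else 0)) := by
      rw [Finset.sum_sigma]
      refine Finset.sum_congr rfl (fun ij _ => ?_)
      rw [Finset.sum_product]
      dsimp only
      rw [← sumB k ij.1, Finset.sum_mul]
      refine Finset.sum_congr rfl (fun μ _ => ?_)
      rw [show AA k ij.2 = ∑ ν ∈ Mset ij.2, (Polynomial.X : Polynomial ℚ) ^ pltk k ν from rfl]
      rw [Finset.mul_sum]
      refine Finset.sum_congr rfl (fun ν _ => ?_)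
      rw [← pow_add]
      congr 1
      omega
    rw [hrhs]
    refine (Finset.sum_bij
      (fun (x : (ij : ℕ × ℕ) × (List Step × List Step)) _ =>
        Step.U :: (x.2.1 ++ Step.D :: x.2.2)) ?_ ?_ ?_ ?_).symm
    · rintro ⟨⟨a, b⟩, μ, ν⟩ hx
      rw [Finset.mem_sigma, Finset.mem_product] at hx
      obtain ⟨hab, hμ, hν⟩ := hx
      rw [Finset.HasAntidiagonal.mem_antidiagonal] at hab
      rw [mem_Mset] at hμ hν
      dsimp only at hμ hν hab
      rw [Finset.mem_filter, mem_Mset]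
      refine ⟨⟨?_, motzkin_compose hμ.2 hν.2⟩, rfl⟩
      simp only [List.length_cons, List.length_append, List.length_cons]
      omega
    · rintro ⟨⟨a₁, b₁⟩, μ₁, ν₁⟩ hx₁ ⟨⟨a₂, b₂⟩, μ₂, ν₂⟩ hx₂ he
      rw [Finset.mem_sigma, Finset.mem_product] at hx₁ hx₂
      obtain ⟨-, hμ₁, hν₁⟩ := hx₁
      obtain ⟨-, hμ₂, hν₂⟩ := hx₂
      rw [mem_Mset] at hμ₁ hν₁ hμ₂ hν₂
      dsimp only at hμ₁ hν₁ hμ₂ hν₂ he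
      simp only [List.cons.injEq, true_and] at he
      obtain ⟨rfl, rfl⟩ := motzkin_unique hμ₁.2 hμ₂.2 he
      obtain rfl : a₁ = a₂ := by rw [← hμ₁.1, ← hμ₂.1]
      obtain rfl : b₁ = b₂ := by rw [← hν₁.1, ← hν₂.1]
      rfl
    · rintro l hl
      rw [Finset.mem_filter, mem_Mset] at hl
      obtain ⟨⟨hlen, hM⟩, hhd⟩ := hl
      obtain ⟨μ, ν, hμ, hν, rfl⟩ := motzkin_decomp hM hhd
      refine ⟨⟨⟨μ.length, ν.length⟩, μ, ν⟩, ?_, rfl⟩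
      rw [Finset.mem_sigma, Finset.mem_product, Finset.HasAntidiagonal.mem_antidiagonal]
      simp only [List.length_cons, List.length_append, List.length_cons] at hlen
      refine ⟨?_, ?_, ?_⟩
      · show μ.length + ν.length = m
        omega
      · exact mem_Mset.mpr ⟨rfl, hμ⟩
      · exact mem_Mset.mpr ⟨rfl, hν⟩
    · rintro ⟨⟨a, b⟩, μ, ν⟩ hx
      rw [Finset.mem_sigma, Finset.mem_product] at hx
      obtain ⟨-, hμ, -⟩ := hx
      rw [mem_Mset] at hμ
      dsimp only at hμ ⊢
      rw [pltk_eq, pltk_eq, pltk_eq, pltk'_decomp hμ.2]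

end Part5

section Part6
open Finset

lemma aux_sum (k m : ℕ) :
    ∑ ij ∈ Finset.HasAntidiagonal.antidiagonal m,
        (AA k ij.1 + (if ij.1 = k then ((Polynomial.X : Polynomial ℚ) - 1) else 0)) * AA k ij.2
      = (∑ ij ∈ Finset.HasAntidiagonal.antidiagonal m, AA k ij.1 * AA k ij.2)
        + (if k ≤ m then ((Polynomial.X : Polynomial ℚ) - 1) * AA k (m - k) else 0) := by
  classical
  simp only [add_mul, Finset.sum_add_distrib]
  congr 1
  simp only [ite_mul, zero_mul]
  rw [Finset.Nat.sum_antidiagonal_eq_sum_range_succ_mk]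
  rw [Finset.sum_ite_eq' (Finset.range (m+1)) k
    (fun i => ((Polynomial.X : Polynomial ℚ) - 1) * AA k (m - i))]
  by_cases h : k ≤ m
  · rw [if_pos (Finset.mem_range.mpr (by omega)), if_pos h]
  · rw [if_neg (fun hc => h (by have := Finset.mem_range.mp hc; omega)), if_neg h]

lemma functional_eq (k : ℕ) :
    Fpltk k = 1 + PowerSeries.X * Fpltk k + PowerSeries.X ^ 2 * (Fpltk k) ^ 2
      + PowerSeries.X ^ (k + 2)
          * (PowerSeries.C (R := Polynomial ℚ) (Polynomial.X - 1) * Fpltk k) := by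
  ext n : 1
  simp only [map_add, PowerSeries.coeff_one]
  rw [PowerSeries.coeff_X_pow_mul', PowerSeries.coeff_X_pow_mul', PowerSeries.coeff_C_mul]
  match n with
  | 0 =>
    rw [coeff_Fpltk, AA_zero, PowerSeries.coeff_zero_X_mul,
      if_pos rfl, if_neg (by omega), if_neg (by omega)]
    simp
  | 1 =>
    rw [coeff_Fpltk, AA_one, PowerSeries.coeff_succ_X_mul, coeff_Fpltk, AA_zero,
      if_neg (by omega), if_neg (by omega), if_neg (by omega)]
    simp
  | (m + 2) =>
    rw [coeff_Fpltk, AA_rec, PowerSeries.coeff_succ_X_mul, coeff_Fpltk,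
      if_neg (by omega), if_pos (by omega : 2 ≤ m + 2)]
    have hsq : (PowerSeries.coeff (R := Polynomial ℚ) (m + 2 - 2)) (Fpltk k ^ 2)
        = ∑ ij ∈ Finset.HasAntidiagonal.antidiagonal m, AA k ij.1 * AA k ij.2 := by
      rw [show m + 2 - 2 = m from rfl, pow_two, PowerSeries.coeff_mul]
      exact Finset.sum_congr rfl (fun ij _ => by rw [coeff_Fpltk, coeff_Fpltk])
    rw [hsq, aux_sum]
    by_cases h : k + 2 ≤ m + 2
    · rw [if_pos h, if_pos (by omega : k ≤ m), coeff_Fpltk,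
        show m + 2 - (k + 2) = m - k by omega]
      ring
    · rw [if_neg h, if_neg (by omega : ¬ k ≤ m)]
      ring

theorem kplateau_aux (k : ℕ) :
    PowerSeries.X ^ 2 * Fpltk k ^ 2
      - (1 - PowerSeries.X - PowerSeries.X ^ (k + 2)
          * (PowerSeries.C (R := Polynomial ℚ) Polynomial.X - 1)) * Fpltk k
      + 1 = 0 := by
  have hC : (PowerSeries.C (R := Polynomial ℚ)) Polynomial.X - 1
      = PowerSeries.C (R := Polynomial ℚ) (Polynomial.X - 1) := by
    rw [map_sub, map_one]
  rw [hC]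
  linear_combination -(functional_eq k)

end Part6

/-- F(x,t) satisfies x²F² − (1 − x − x^{k+2}(t−1))F + 1 = 0. -/
theorem kplateau_functional_equation (k : ℕ) :
    PowerSeries.X ^ 2 * Fpltk k ^ 2
      - (1 - PowerSeries.X - PowerSeries.X ^ (k + 2)
          * (PowerSeries.C (R := Polynomial ℚ) Polynomial.X - 1)) * Fpltk k
      + 1 = 0 := by exact kplateau_aux k
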